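/- arXiv:2604.05569 — 4 statements merged into one kernel-verified Lean document; each statement's English description precedes it below -/
import Mathlib

section
/- Let M be a metric space, γ : [0,1] → M a continuous path joining u = γ(0) and v = γ(1) with length L(γ) ≥ d(u,v), and let F ⊆ M be a finite set with |F| ≤ 2n+1 points, where r = d(u,v)/(9n) for some positive integer n. Then there exists a point x in the image of γ with d(x, p) ≥ 2r for all p ∈ F. -/
open Set Metric

/-- Length of a path `γ` parametrized on `[0,1]`, as the supremum over partitions
`0 = t₀ ≤ ⋯ ≤ tₙ = 1` of `∑ d(γ tᵢ, γ tᵢ₊₁)`. -/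
noncomputable def pathLength {M : Type*} [MetricSpace M] (γ : ℝ → M) : ℝ :=
  (eVariationOn γ (Set.Icc 0 1)).toReal

/-- The path `γ` has finite length. -/
def FiniteLength {M : Type*} [MetricSpace M] (γ : ℝ → M) : Prop :=
  eVariationOn γ (Set.Icc 0 1) ≠ ⊤

/-- `γ` is a continuous path on `[0,1]` joining `p` and `q`. -/
def IsPathFrom {M : Type*} [MetricSpace M] (γ : ℝ → M) (p q : M) : Prop :=
  ContinuousOn γ (Set.Icc 0 1) ∧ γ 0 = p ∧ γ 1 = q

/-- `M` is a length space: distances are infima of lengths of joining paths. -/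
def IsLengthSpace (M : Type*) [MetricSpace M] : Prop :=
  ∀ p q : M, ∀ ε > 0, ∃ γ : ℝ → M, IsPathFrom γ p q ∧ FiniteLength γ ∧
    pathLength γ < dist p q + ε

/-- On a path joining `u` and `v` of length at least `d(u,v)`, with `r = d(u,v)/(9n)`,
one can find a point avoiding `2r`-neighbourhoods of any `2n` prescribed points. -/
theorem exists_point_far_from_finset {M : Type*} [MetricSpace M] (u v : M)
    (huv : u ≠ v) (n : ℕ) (hn : 0 < n) (γ : ℝ → M) (hγ : IsPathFrom γ u v)
    (hfin : FiniteLength γ) (hL : dist u v ≤ pathLength γ)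
    (F : Finset M) (hF : F.card ≤ 2 * n) :
    ∃ x ∈ γ '' Set.Icc (0:ℝ) 1, ∀ p ∈ F, 2 * (dist u v / (9 * n)) ≤ dist x p := by
  classical
  by_contra hcon
  push_neg at hcon
  set r : ℝ := dist u v / (9 * n) with hr
  have hrpos : 0 < r := div_pos (dist_pos.2 huv) (by positivity)
  set ρ : ℝ := 2 * r with hρ
  set s : Set M := γ '' Set.Icc 0 1 with hsdef
  have hsc : IsPreconnected s := isPreconnected_Icc.image γ hγ.1
  have hus : u ∈ s := ⟨0, by norm_num, hγ.2.1⟩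
  have hvs : v ∈ s := ⟨1, by norm_num, hγ.2.2⟩
  obtain ⟨p₀, hp₀F, hp₀⟩ := hcon u hus
  obtain ⟨p₁, hp₁F, hp₁⟩ := hcon v hvs
  let G : SimpleGraph {p // p ∈ F} :=
    { Adj := fun p q => p ≠ q ∧ (ball (p : M) ρ ∩ ball (q : M) ρ ∩ s).Nonempty
      symm := by
        constructor
        rintro p q ⟨hne, x, ⟨hx1, hx2⟩, hx3⟩
        exact ⟨hne.symm, x, ⟨hx2, hx1⟩, hx3⟩
      loopless := ⟨fun p h => h.1 rfl⟩ }
  -- walk distance bound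
  have key : ∀ (p q : {p // p ∈ F}) (w : G.Walk p q),
      dist (p : M) (q : M) ≤ 2 * ρ * w.length := by
    intro p q w
    induction w with
    | nil => simp [dist_self]
    | @cons a b c hadj w ih =>
      rw [SimpleGraph.Walk.length_cons]
      obtain ⟨hne, x, ⟨hx1, hx2⟩, _⟩ := hadj
      have h1 : dist (a : M) x < ρ := by rw [dist_comm]; exact mem_ball.1 hx1
      have h2 : dist x (b : M) < ρ := mem_ball.1 hx2
      have := dist_triangle (a : M) (b : M) (c : M)
      have h3 := dist_triangle (a : M) x (b : M)
      push_cast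
      nlinarith
  have hreach : G.Reachable ⟨p₀, hp₀F⟩ ⟨p₁, hp₁F⟩ := by
    by_contra hnr
    set U : Set M := ⋃ (p : {p // p ∈ F}) (_ : G.Reachable ⟨p₀, hp₀F⟩ p),
      ball (p : M) ρ with hU
    set W : Set M := ⋃ (p : {p // p ∈ F}) (_ : ¬ G.Reachable ⟨p₀, hp₀F⟩ p),
      ball (p : M) ρ with hW
    have hUo : IsOpen U := isOpen_iUnion fun p => isOpen_iUnion fun _ => isOpen_ball
    have hWo : IsOpen W := isOpen_iUnion fun p => isOpen_iUnion fun _ => isOpen_ball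
    have hsub : s ⊆ U ∪ W := by
      intro x hx
      obtain ⟨p, hpF, hxp⟩ := hcon x hx
      have hxball : x ∈ ball (p : M) ρ := mem_ball.2 hxp
      by_cases hR : G.Reachable ⟨p₀, hp₀F⟩ ⟨p, hpF⟩
      · exact Or.inl (mem_iUnion₂.2 ⟨⟨p, hpF⟩, hR, hxball⟩)
      · exact Or.inr (mem_iUnion₂.2 ⟨⟨p, hpF⟩, hR, hxball⟩)
    have h1 : (s ∩ U).Nonempty :=
      ⟨u, hus, mem_iUnion₂.2 ⟨⟨p₀, hp₀F⟩, SimpleGraph.Reachable.refl _,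
        mem_ball.2 hp₀⟩⟩
    have h2 : (s ∩ W).Nonempty :=
      ⟨v, hvs, mem_iUnion₂.2 ⟨⟨p₁, hp₁F⟩, hnr,
        mem_ball.2 hp₁⟩⟩
    obtain ⟨x, hxs, hxU, hxW⟩ := hsc U W hUo hWo hsub h1 h2
    obtain ⟨p, hpR, hxp⟩ := mem_iUnion₂.1 hxU
    obtain ⟨q, hqR, hxq⟩ := mem_iUnion₂.1 hxW
    have hne : p ≠ q := by rintro rfl; exact hqR hpR
    exact hqR (hpR.trans (SimpleGraph.Adj.reachable ⟨hne, x, ⟨hxp, hxq⟩, hxs⟩))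
  obtain ⟨w⟩ := hreach
  have hpath := w.toPath
  have hlen : (w.toPath : G.Walk ⟨p₀, hp₀F⟩ ⟨p₁, hp₁F⟩).length < F.card := by
    have := SimpleGraph.Walk.IsPath.length_lt w.toPath.2
    simpa [Fintype.card_coe] using this
  have hlen' : ((w.toPath : G.Walk ⟨p₀, hp₀F⟩ ⟨p₁, hp₁F⟩).length : ℝ) ≤ 2 * n - 1 := by
    have : (w.toPath : G.Walk ⟨p₀, hp₀F⟩ ⟨p₁, hp₁F⟩).length + 1 ≤ 2 * n :=
      Nat.succ_le_of_lt (lt_of_lt_of_le hlen hF)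
    have := (Nat.cast_le (α := ℝ)).2 this
    push_cast at this
    linarith
  have hb := key _ _ (w.toPath : G.Walk ⟨p₀, hp₀F⟩ ⟨p₁, hp₁F⟩)
  have hd : dist u v ≤ dist u p₀ + dist p₀ p₁ + dist p₁ v := dist_triangle4 _ _ _ _
  have hdu : dist u p₀ < ρ := hp₀
  have hdv : dist p₁ v < ρ := by rw [dist_comm]; exact hp₁
  have hdist : dist p₀ p₁ ≤ 2 * ρ * (2 * n - 1) := by
    calc dist p₀ p₁ ≤ 2 * ρ * (w.toPath : G.Walk ⟨p₀, hp₀F⟩ ⟨p₁, hp₁F⟩).length := hb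
    _ ≤ 2 * ρ * (2 * n - 1) := by
        apply mul_le_mul_of_nonneg_left hlen' (by positivity)
  have h9 : dist u v = 9 * n * r := by
    rw [hr]; field_simp
  have hn1 : (1 : ℝ) ≤ n := by exact_mod_cast hn
  rw [h9] at hd
  rw [hρ] at hdu hdv hdist
  nlinarith [hrpos, hn1]
end

section
/- Let M be a length space, f : M → ℝ a 1-Lipschitz function, and ε > 0 with points u ≠ v in M satisfying (f u - f v)/d(u,v) > 1 - ε. Then for every r with 0 < r < d(u,v)/2 and every δ > 0, there exist points x, z in M with d(x,z) = r lying on a path from u to v of length less than (1+δ)·d(u,v), such that (f x - f z)/d(x,z) > 1 - (δ·d(u,v) + ε·d(u,v))/r. -/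
open Set Metric

/-- Evaluation of a Lipschitz function `f` on the elementary molecule `m_{p,q}`,
i.e. `⟨f, m_{p,q}⟩ = (f p - f q) / d(p,q)`. -/
noncomputable def molEval {M : Type*} [MetricSpace M] (f : M → ℝ) (p q : M) : ℝ :=
  (f p - f q) / dist p q

theorem exists_norming_pair_at_scale {M : Type*} [MetricSpace M]
    (hM : IsLengthSpace M) (f : M → ℝ) (hf : LipschitzWith 1 f)
    (ε : ℝ) (hε : 0 < ε) (u v : M) (huv : u ≠ v)
    (hfuv : molEval f u v > 1 - ε) (r : ℝ) (hr : 0 < r) (hr2 : r < dist u v / 2)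
    (δ : ℝ) (hδ : 0 < δ) :
    ∃ (x z : M) (γ : ℝ → M), IsPathFrom γ u v ∧ FiniteLength γ ∧
      pathLength γ < (1 + δ) * dist u v ∧
      x ∈ γ '' Set.Icc (0:ℝ) 1 ∧ z ∈ γ '' Set.Icc (0:ℝ) 1 ∧ dist x z = r ∧
      molEval f x z > 1 - (δ * dist u v + ε * dist u v) / r := by
  set d := dist u v with hd
  have hd0 : 0 < d := dist_pos.2 huv
  obtain ⟨γ, hγpath, hγfin, hγlen⟩ := hM u v (δ * d) (mul_pos hδ hd0)
  obtain ⟨hγcont, hγ0, hγ1⟩ := hγpath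
  have hγlen' : pathLength γ < (1 + δ) * d := by rw [one_add_mul]; linarith
  by_contra hcon
  push_neg at hcon
  -- find t with dist u (γ t) = r by the intermediate value theorem
  have hg : ContinuousOn (fun t => dist u (γ t)) (Set.Icc (0:ℝ) 1) :=
    (continuous_const.dist continuous_id).comp_continuousOn hγcont
  have hsub : Set.Icc (dist u (γ 0)) (dist u (γ 1)) ⊆
      (fun t => dist u (γ t)) '' Set.Icc (0:ℝ) 1 :=
    intermediate_value_Icc zero_le_one hg
  have hrd : r ∈ Set.Icc (dist u (γ 0)) (dist u (γ 1)) := by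
    rw [hγ0, hγ1, dist_self]
    exact ⟨hr.le, by linarith [half_le_self hd0.le]⟩
  obtain ⟨t, ht, hgt⟩ := hsub hrd
  simp only at hgt
  -- chord-sum bound: dist u (γ t) + dist (γ t) v ≤ pathLength γ
  have hkey : dist u (γ t) + dist (γ t) v ≤ pathLength γ := by
    have h1 : edist (γ 0) (γ t) ≤ eVariationOn γ (Set.Icc 0 t) :=
      eVariationOn.edist_le γ ⟨le_rfl, ht.1⟩ ⟨ht.1, le_rfl⟩
    have h2 : edist (γ t) (γ 1) ≤ eVariationOn γ (Set.Icc t 1) :=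
      eVariationOn.edist_le γ ⟨le_rfl, ht.2⟩ ⟨ht.2, le_rfl⟩
    have h3 : eVariationOn γ (Set.Icc 0 t) + eVariationOn γ (Set.Icc t 1)
        = eVariationOn γ (Set.Icc 0 1) := by
      have := eVariationOn.Icc_add_Icc γ (s := Set.univ) ht.1 ht.2 (Set.mem_univ t)
      simpa using this
    have h4 : edist (γ 0) (γ t) + edist (γ t) (γ 1) ≤ eVariationOn γ (Set.Icc 0 1) := by
      rw [← h3]; exact add_le_add h1 h2
    have h6 := (ENNReal.toReal_le_toReal (ne_top_of_le_ne_top hγfin h4) hγfin).2 h4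
    rw [ENNReal.toReal_add (edist_ne_top _ _) (edist_ne_top _ _)] at h6
    simp only [← dist_edist] at h6
    rw [hγ0, hγ1] at h6
    exact h6
  -- apply the negated conclusion to x = u, z = γ t
  have hx : u ∈ γ '' Set.Icc (0:ℝ) 1 := ⟨0, ⟨le_rfl, zero_le_one⟩, hγ0⟩
  have hz : γ t ∈ γ '' Set.Icc (0:ℝ) 1 := ⟨t, ht, rfl⟩
  have hdxz : dist u (γ t) = r := hgt
  have hbad := hcon u (γ t) γ ⟨hγcont, hγ0, hγ1⟩ hγfin hγlen' hx hz hdxz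
  -- turn everything into linear inequalities
  set c := δ * d + ε * d with hc
  have hstep : f u - f (γ t) ≤ r - c := by
    unfold molEval at hbad
    rw [hdxz] at hbad
    have h7 := (div_le_iff₀ hr).1 hbad
    have h8 : (1 - c / r) * r = r - c := by field_simp
    linarith [h7, h8.symm.le]
  have hfuv' : f u - f v > (1 - ε) * d := by
    unfold molEval at hfuv
    have := (lt_div_iff₀ hd0).1 hfuv
    linarith
  have hlip : f (γ t) - f v ≤ dist (γ t) v := by
    have := hf.dist_le_mul (γ t) v
    rw [Real.dist_eq] at this
    norm_num at this
    exact (le_abs_self _).trans this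
  have : f u - f v ≤ pathLength γ - c := by linarith
  have hfin : pathLength γ - c < (1 - ε) * d := by
    rw [hc]; nlinarith [hγlen']
  linarith
end

section
/- Let M be a length space, n a positive integer, f₁,…,fₙ : M → ℝ 1-Lipschitz functions, and α > 0. Suppose for each i there exist uᵢ ≠ vᵢ with (fᵢ uᵢ - fᵢ vᵢ)/d(uᵢ,vᵢ) > 1 - α/(18n). Then there exist points x₁,…,xₙ, z₁,…,zₙ, w₁,…,wₙ, y₁,…,yₙ in M and positive reals r₁,…,rₙ such that for each i: d(xᵢ,zᵢ) = d(yᵢ,wᵢ) = rᵢ, (fᵢ xᵢ - fᵢ zᵢ)/d(xᵢ,zᵢ) > 1 - α, (fᵢ wᵢ - fᵢ yᵢ)/d(wᵢ,yᵢ) > 1 - α, and the 2n open balls B(xᵢ, rᵢ), B(yᵢ, rᵢ) are pairwise disjoint. -/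
open Set Metric

/-- two balls are disjoint provided a 1-Lipschitz function separates the centers. -/
lemma balls_disjoint {M : Type*} [MetricSpace M] {g : M → ℝ} (hg : LipschitzWith 1 g)
    {c₁ c₂ : M} {r₁ r₂ : ℝ} (h : r₁ + r₂ ≤ |g c₁ - g c₂|) :
    Disjoint (ball c₁ r₁) (ball c₂ r₂) := by
  rw [Set.disjoint_left]
  intro p h1 h2
  rw [mem_ball] at h1 h2
  have e1 : |g p - g c₁| ≤ dist p c₁ := by
    simpa [Real.dist_eq] using hg.dist_le_mul p c₁
  have e2 : |g p - g c₂| ≤ dist p c₂ := by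
    simpa [Real.dist_eq] using hg.dist_le_mul p c₂
  have := abs_sub_le (g c₁) (g p) (g c₂)
  rw [abs_sub_comm (g c₁) (g p)] at this
  linarith

/-- Inside a path segment with drop `s` and deficit at most `δ`, one can find a point `z`
at distance exactly `s/2` from the left endpoint, with an almost-full drop. -/
lemma segment_extract {M : Type*} [MetricSpace M] (f : M → ℝ) (hf : LipschitzWith 1 f)
    (γ : ℝ → M) (hγ : ContinuousOn γ (Set.Icc 0 1)) {a b : ℝ} (hab : a ≤ b)
    (hsub : Set.Icc a b ⊆ Set.Icc 0 1) {s δ : ℝ} (hs : 0 < s)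
    (hdrop : f (γ a) - f (γ b) = s)
    (hfin : eVariationOn γ (Set.Icc a b) ≠ ⊤)
    (hdef : (eVariationOn γ (Set.Icc a b)).toReal ≤ s + δ) :
    ∃ z, dist (γ a) z = s / 2 ∧ s / 2 - δ ≤ f (γ a) - f z ∧ |f z - f (γ a)| ≤ s / 2 := by
  have hφ : ContinuousOn (fun θ => dist (γ a) (γ θ)) (Set.Icc a b) :=
    (continuous_const.dist continuous_id).comp_continuousOn (hγ.mono hsub)
  have hs2 : s / 2 ∈ Set.Icc (dist (γ a) (γ a)) (dist (γ a) (γ b)) := by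
    constructor
    · rw [dist_self]; positivity
    · have : |f (γ a) - f (γ b)| ≤ dist (γ a) (γ b) := by
        simpa [Real.dist_eq] using hf.dist_le_mul (γ a) (γ b)
      rw [hdrop] at this
      have := (le_abs_self s).trans this
      linarith
  obtain ⟨θ, hθmem, hθval⟩ := intermediate_value_Icc hab hφ hs2
  simp only at hθval
  refine ⟨γ θ, hθval, ?_, ?_⟩
  · -- variation splitting
    have hsplit := eVariationOn.Icc_add_Icc γ (s := Set.univ) hθmem.1 hθmem.2 (Set.mem_univ θ)
    simp only [Set.univ_inter] at hsplit
    have h1fin : eVariationOn γ (Set.Icc a θ) ≠ ⊤ := by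
      intro htop; rw [← hsplit, htop] at hfin; simp at hfin
    have h2fin : eVariationOn γ (Set.Icc θ b) ≠ ⊤ := by
      intro htop; rw [← hsplit, htop] at hfin; simp at hfin
    have hadd : (eVariationOn γ (Set.Icc a θ)).toReal + (eVariationOn γ (Set.Icc θ b)).toReal
        = (eVariationOn γ (Set.Icc a b)).toReal := by
      rw [← ENNReal.toReal_add h1fin h2fin, hsplit]
    have h1ge : dist (γ a) (γ θ) ≤ (eVariationOn γ (Set.Icc a θ)).toReal := by
      have := eVariationOn.edist_le γ (Set.left_mem_Icc.2 hθmem.1)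
        (Set.right_mem_Icc.2 hθmem.1) (x := a) (y := θ)
      rw [dist_edist]
      exact ENNReal.toReal_mono h1fin this
    have h2ge : f (γ θ) - f (γ b) ≤ (eVariationOn γ (Set.Icc θ b)).toReal := by
      have hd : |f (γ θ) - f (γ b)| ≤ dist (γ θ) (γ b) := by
        simpa [Real.dist_eq] using hf.dist_le_mul (γ θ) (γ b)
      have := eVariationOn.edist_le γ (Set.left_mem_Icc.2 hθmem.2)
        (Set.right_mem_Icc.2 hθmem.2) (x := θ) (y := b)
      have h2 : dist (γ θ) (γ b) ≤ (eVariationOn γ (Set.Icc θ b)).toReal := by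
        rw [dist_edist]
        exact ENNReal.toReal_mono h2fin this
      exact (le_abs_self _).trans (hd.trans h2)
    rw [hθval] at h1ge
    linarith
  · have : |f (γ θ) - f (γ a)| ≤ dist (γ θ) (γ a) := by
      simpa [Real.dist_eq] using hf.dist_le_mul (γ θ) (γ a)
    rw [dist_comm] at this
    rw [hθval] at this
    exact this

set_option maxHeartbeats 1000000 in
lemma step {M : Type*} [MetricSpace M] (hM : IsLengthSpace M)
    (f : M → ℝ) (hf : LipschitzWith 1 f) (u v : M) (a s : ℝ)
    (ha : 0 < a) (ha1 : a ≤ 1) (hs : 0 < s) (F : Finset ℝ)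
    (hcount : 3*(dist u v + 2*s - (f u - f v))/a + s*(6*F.card + 7) ≤ f u - f v) :
    ∃ x z w y : M, dist x z = s/2 ∧ dist y w = s/2 ∧
      molEval f x z > 1 - a ∧ molEval f w y > 1 - a ∧
      s ≤ |f x - f y| ∧ ∀ c ∈ F, s ≤ |f x - c| ∧ s ≤ |f y - c| := by
  classical
  obtain ⟨γ, ⟨hγc, hγ0, hγ1⟩, hfin, hlen⟩ := hM u v s hs
  set T := f u - f v with hTdef
  have hTd : T ≤ dist u v := by
    have : |f u - f v| ≤ dist u v := by simpa [Real.dist_eq] using hf.dist_le_mul u v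
    exact (le_abs_self _).trans this
  have hΔ0 : 0 ≤ dist u v + 2*s - T := by linarith
  have hFc0 : (0:ℝ) ≤ 6*F.card + 7 := by positivity
  have hFc0' : (0:ℝ) ≤ (F.card:ℝ) := by positivity
  have hTpos : 7 * s ≤ T := by
    have h1 : 0 ≤ 3*(dist u v + 2*s - T)/a := by positivity
    nlinarith [hcount, mul_nonneg hs.le hFc0']
  have hsT : s ≤ T := by nlinarith
  set K := ⌊T/s⌋₊ with hKdef
  have hK1 : 1 ≤ K := Nat.le_floor (by rw [Nat.cast_one, le_div_iff₀ hs]; linarith)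
  have hKs : (K:ℝ) * s ≤ T := by
    have h0 := Nat.floor_le (div_nonneg (by linarith) hs.le : (0:ℝ) ≤ T/s)
    have := mul_le_mul_of_nonneg_right h0 hs.le
    rwa [div_mul_cancel₀ _ (ne_of_gt hs)] at this
  have hKs' : T - s ≤ (K:ℝ) * s := by
    have := Nat.lt_floor_add_one (T/s)
    have h2 : T/s < (K:ℝ) + 1 := by exact_mod_cast this
    have h3 := (div_lt_iff₀ hs).1 h2
    nlinarith
  set lam : ℕ → ℝ := fun k => f u - k * s with hlam
  have hlamval : ∀ k : ℕ, lam k = f u - k * s := fun k => rfl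
  set A : ℕ → Set ℝ := fun k => Icc (0:ℝ) 1 ∩ (fun t => f (γ t)) ⁻¹' (Iic (lam k)) with hA
  have hh : ContinuousOn (fun t => f (γ t)) (Icc (0:ℝ) 1) :=
    hf.continuous.comp_continuousOn hγc
  have hAclosed : ∀ k, IsClosed (A k) := fun k =>
    hh.preimage_isClosed_of_isClosed isClosed_Icc isClosed_Iic
  have hA1 : ∀ k, k ≤ K → 1 ∈ A k := by
    intro k hk
    refine ⟨right_mem_Icc.2 zero_le_one, ?_⟩
    simp only [mem_preimage, mem_Iic, hγ1]
    rw [hlamval]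
    have h1 : (k:ℝ) * s ≤ (K:ℝ) * s := by
      have : (k:ℝ) ≤ K := by exact_mod_cast hk
      exact mul_le_mul_of_nonneg_right this hs.le
    have h2 := h1.trans hKs
    rw [hTdef] at h2
    linarith
  have hAbdd : ∀ k, BddBelow (A k) := fun k => ⟨0, fun t ht => ht.1.1⟩
  set t : ℕ → ℝ := fun k => sInf (A k) with ht
  have htmem : ∀ k, k ≤ K → t k ∈ A k := fun k hk =>
    (hAclosed k).csInf_mem ⟨1, hA1 k hk⟩ (hAbdd k)
  have htmin : ∀ k, ∀ t' ∈ A k, t k ≤ t' := fun k t' ht' => csInf_le (hAbdd k) ht'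
  have htval : ∀ k, k ≤ K → f (γ (t k)) = lam k := by
    intro k hk
    have h1 := htmem k hk
    have h0le : (0:ℝ) ≤ t k := h1.1.1
    have hle1 : t k ≤ 1 := h1.1.2
    have hsub2 : Icc (f (γ (t k))) (f (γ 0)) ⊆ (fun t => f (γ t)) '' Icc 0 (t k) :=
      intermediate_value_Icc' h0le (hh.mono (Icc_subset_Icc le_rfl hle1))
    have hmem : lam k ∈ Icc (f (γ (t k))) (f (γ 0)) := by
      refine ⟨h1.2, ?_⟩
      rw [hγ0, hlamval]
      have : (0:ℝ) ≤ (k:ℝ) * s := by positivity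
      linarith
    obtain ⟨t', ht'mem, ht'val⟩ := hsub2 hmem
    have h2 : t k ≤ t' := htmin k t'
      ⟨⟨ht'mem.1, ht'mem.2.trans hle1⟩, by simp only [mem_preimage, mem_Iic]; exact le_of_eq ht'val⟩
    have h3 : t' = t k := le_antisymm ht'mem.2 h2
    rw [← h3]
    exact ht'val
  have htmono : ∀ j k, j ≤ k → k ≤ K → t j ≤ t k := by
    intro j k hjk hk
    refine htmin j (t k) ?_
    obtain ⟨hm, hv⟩ := htmem k hk
    refine ⟨hm, ?_⟩
    simp only [mem_preimage, mem_Iic] at hv ⊢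
    refine hv.trans ?_
    rw [hlamval, hlamval]
    have : (j:ℝ) * s ≤ (k:ℝ) * s := by
      have h' : (j:ℝ) ≤ k := by exact_mod_cast hjk
      exact mul_le_mul_of_nonneg_right h' hs.le
    linarith
  have htIcc : ∀ k, k ≤ K → t k ∈ Icc (0:ℝ) 1 := fun k hk => (htmem k hk).1
  -- variation pieces
  set L : ℕ → ENNReal := fun k => eVariationOn γ (Icc (t k) (t (k+1))) with hL
  have hsum : ∀ m, m ≤ K → (∑ k ∈ Finset.range m, L k) = eVariationOn γ (Icc (t 0) (t m)) := by
    intro m hm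
    induction m with
    | zero =>
      simp only [Finset.range_zero, Finset.sum_empty]
      symm
      rw [Icc_self]
      exact eVariationOn.subsingleton γ (Set.subsingleton_singleton)
    | succ m ih =>
      rw [Finset.sum_range_succ, ih (Nat.le_of_succ_le hm)]
      have := eVariationOn.Icc_add_Icc γ (s := Set.univ)
        (htmono 0 m (Nat.zero_le m) (Nat.le_of_succ_le hm))
        (htmono m (m+1) (Nat.le_succ m) hm) (Set.mem_univ (t m))
      simpa only [Set.univ_inter] using this
  have hsumle : (∑ k ∈ Finset.range K, L k) ≤ eVariationOn γ (Icc 0 1) := by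
    rw [hsum K le_rfl]
    exact eVariationOn.mono γ (Icc_subset_Icc (htIcc 0 (Nat.zero_le K)).1 (htIcc K le_rfl).2)
  have hLfin : ∀ k, k < K → L k ≠ ⊤ := by
    intro k hk
    have h1 : L k ≤ eVariationOn γ (Icc 0 1) := by
      apply eVariationOn.mono
      exact Icc_subset_Icc (htIcc k hk.le).1 (htIcc (k+1) hk).2
    exact ne_top_of_le_ne_top hfin h1
  set Lr : ℕ → ℝ := fun k => (L k).toReal with hLr
  have hdist_le : ∀ k, k < K → dist (γ (t k)) (γ (t (k+1))) ≤ Lr k := by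
    intro k hk
    have := eVariationOn.edist_le γ (left_mem_Icc.2 (htmono k (k+1) (Nat.le_succ k) hk))
      (right_mem_Icc.2 (htmono k (k+1) (Nat.le_succ k) hk))
    rw [dist_edist]
    exact ENNReal.toReal_mono (hLfin k hk) this
  have hdrop : ∀ k, k < K → f (γ (t k)) - f (γ (t (k+1))) = s := by
    intro k hk
    rw [htval k hk.le, htval (k+1) hk, hlamval, hlamval]
    push_cast
    ring
  have hLr_ge : ∀ k, k < K → s ≤ Lr k := by
    intro k hk
    have h1 : |f (γ (t k)) - f (γ (t (k+1)))| ≤ dist (γ (t k)) (γ (t (k+1))) := by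
      simpa [Real.dist_eq] using hf.dist_le_mul (γ (t k)) (γ (t (k+1)))
    have h2 := (le_abs_self _).trans (h1.trans (hdist_le k hk))
    rw [hdrop k hk] at h2
    exact h2
  have hsum_r : (∑ k ∈ Finset.range K, Lr k) ≤ pathLength γ := by
    rw [hLr]
    rw [← ENNReal.toReal_sum (fun k hk => hLfin k (Finset.mem_range.1 hk))]
    exact ENNReal.toReal_mono hfin hsumle
  have hdefsum : (∑ k ∈ Finset.range K, (Lr k - s)) ≤ dist u v + 2*s - T := by
    rw [Finset.sum_sub_distrib, Finset.sum_const, Finset.card_range]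
    have : (K:ℝ) * s ≥ T - s := hKs'
    have h2 : (∑ k ∈ Finset.range K, Lr k) ≤ dist u v + s := le_of_lt (hsum_r.trans_lt hlen)
    simp only [nsmul_eq_mul]
    linarith
  -- counting
  set Sbad := (Finset.range K).filter (fun k => a*s/3 ≤ Lr k - s) with hSbad
  have hbadcard : (Sbad.card : ℝ) * (a*s/3) ≤ dist u v + 2*s - T := by
    have h1 : Sbad.card • (a*s/3) ≤ ∑ k ∈ Sbad, (Lr k - s) :=
      Finset.card_nsmul_le_sum Sbad _ _ (fun k hk => (Finset.mem_filter.1 hk).2)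
    have h2 : (∑ k ∈ Sbad, (Lr k - s)) ≤ ∑ k ∈ Finset.range K, (Lr k - s) :=
      Finset.sum_le_sum_of_subset_of_nonneg (Finset.filter_subset _ _)
        (fun k hk _ => by linarith [hLr_ge k (Finset.mem_range.1 hk)])
    have := (h1.trans h2).trans hdefsum
    simpa [nsmul_eq_mul] using this
  set Sblk := (Finset.range K).filter (fun k => ∃ c ∈ F, |lam k - c| < 3*s) with hSblk
  have hblkcard : Sblk.card ≤ 6 * F.card := by
    have hsub2 : Sblk ⊆ F.biUnion (fun c => (Finset.range K).filter (fun k => |lam k - c| < 3*s)) := by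
      intro k hk
      obtain ⟨hk1, c, hc, hc2⟩ := Finset.mem_filter.1 hk
      exact Finset.mem_biUnion.2 ⟨c, hc, Finset.mem_filter.2 ⟨hk1, hc2⟩⟩
    refine (Finset.card_le_card hsub2).trans ((Finset.card_biUnion_le).trans ?_)
    have hstep : ∀ c ∈ F,
        ((Finset.range K).filter (fun k => |lam k - c| < 3*s)).card ≤ 6 := by
      intro c _
      set Bc := (Finset.range K).filter (fun k => |lam k - c| < 3*s) with hBc
      rcases Finset.eq_empty_or_nonempty Bc with he | hne
      · simp [he]
      · set k0 := Bc.min' hne with hk0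
        have hsub3 : Bc ⊆ Finset.Icc k0 (k0 + 5) := by
          intro k hk
          refine Finset.mem_Icc.2 ⟨Finset.min'_le Bc k hk, ?_⟩
          have h1 := (Finset.mem_filter.1 hk).2
          have h2 := (Finset.mem_filter.1 (Bc.min'_mem hne)).2
          have h3 : |lam k0 - lam k| < 6*s := by
            calc |lam k0 - lam k| ≤ |lam k0 - c| + |c - lam k| := abs_sub_le _ _ _
            _ < 6*s := by rw [abs_sub_comm c (lam k)]; linarith
          have h4 : lam k0 - lam k = ((k:ℝ) - k0) * s := by rw [hlamval, hlamval]; push_cast; ring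
          have h5 : (k:ℝ) - k0 < 6 := by
            by_contra h
            push_neg at h
            have : lam k0 - lam k ≥ 6 * s := by rw [h4]; nlinarith
            have := (le_abs_self _).trans_lt h3
            linarith
          have : (k:ℝ) < k0 + 6 := by linarith
          have : k < k0 + 6 := by exact_mod_cast this
          omega
        calc Bc.card ≤ (Finset.Icc k0 (k0+5)).card := Finset.card_le_card hsub3
        _ = 6 := by rw [Nat.card_Icc]; omega
    calc (∑ c ∈ F, ((Finset.range K).filter (fun k => |lam k - c| < 3*s)).card)
        ≤ ∑ _c ∈ F, 6 := Finset.sum_le_sum hstep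
    _ = 6 * F.card := by rw [Finset.sum_const, smul_eq_mul, mul_comm]
  set S := (Finset.range K).filter
    (fun k => Lr k - s < a*s/3 ∧ ∀ c ∈ F, 3*s ≤ |lam k - c|) with hS
  have hcover : ∀ k ∈ Finset.range K, k ∈ S ∨ k ∈ Sbad ∨ k ∈ Sblk := by
    intro k hk
    by_cases h1 : a*s/3 ≤ Lr k - s
    · exact Or.inr (Or.inl (Finset.mem_filter.2 ⟨hk, h1⟩))
    by_cases h2 : ∃ c ∈ F, |lam k - c| < 3*s
    · exact Or.inr (Or.inr (Finset.mem_filter.2 ⟨hk, h2⟩))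
    push_neg at h1 h2
    exact Or.inl (Finset.mem_filter.2 ⟨hk, h1, fun c hc => h2 c hc⟩)
  have hKcard : K ≤ S.card + Sbad.card + Sblk.card := by
    have : Finset.range K ⊆ S ∪ Sbad ∪ Sblk := by
      intro k hk
      rcases hcover k hk with h | h | h
      · exact Finset.mem_union.2 (Or.inl (Finset.mem_union.2 (Or.inl h)))
      · exact Finset.mem_union.2 (Or.inl (Finset.mem_union.2 (Or.inr h)))
      · exact Finset.mem_union.2 (Or.inr h)
    calc K = (Finset.range K).card := (Finset.card_range K).symm
    _ ≤ (S ∪ Sbad ∪ Sblk).card := Finset.card_le_card this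
    _ ≤ (S ∪ Sbad).card + Sblk.card := Finset.card_union_le _ _
    _ ≤ S.card + Sbad.card + Sblk.card := by
        have := Finset.card_union_le S Sbad; omega
  have hScard : 6 ≤ S.card := by
    have hcast : ((6:ℕ):ℝ) ≤ (S.card : ℝ) → 6 ≤ S.card := fun h => by exact_mod_cast h
    apply hcast
    have h1 : (K:ℝ) ≤ (S.card:ℝ) + Sbad.card + Sblk.card := by exact_mod_cast hKcard
    have h2 : (Sblk.card:ℝ) ≤ 6 * F.card := by exact_mod_cast hblkcard
    have h3 : 3*(dist u v + 2*s - T) ≤ a * (T - s*(6*F.card+7)) := by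
      have h0 : 3*(dist u v + 2*s - T)/a ≤ T - s*(6*F.card+7) := by linarith
      calc 3*(dist u v + 2*s - T) = (3*(dist u v + 2*s - T)/a) * a := by field_simp
      _ ≤ (T - s*(6*F.card+7)) * a := mul_le_mul_of_nonneg_right h0 ha.le
      _ = a * (T - s*(6*F.card+7)) := mul_comm _ _
    have h5 : (Sbad.card:ℝ) * (a * s) ≤ 3 * (dist u v + 2*s - T) := by
      have he : 3*((Sbad.card:ℝ)*(a*s/3)) = (Sbad.card:ℝ)*(a*s) := by ring
      linarith
    have h4 : (Sbad.card:ℝ) * s ≤ T - s*(6*F.card+7) := by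
      have h6 : a * ((Sbad.card:ℝ) * s) ≤ a * (T - s*(6*F.card+7)) := by
        have he : (Sbad.card:ℝ)*(a*s) = a*((Sbad.card:ℝ)*s) := by ring
        linarith [h5.trans h3]
      exact le_of_mul_le_mul_left h6 ha
    have h7 : (Sbad.card:ℝ) ≤ (K:ℝ) - 6*F.card - 6 := by
      have h8 : (Sbad.card:ℝ) * s ≤ ((K:ℝ) - 6*F.card - 6) * s := by
        have he : ((K:ℝ) - 6*F.card - 6) * s = (K:ℝ)*s + s - s*(6*F.card+7) := by ring
        linarith
      exact le_of_mul_le_mul_right h8 hs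
    push_cast
    linarith
  have hSne : S.Nonempty := Finset.card_pos.1 (by omega)
  set k1 := S.min' hSne with hk1def
  set k2 := S.max' hSne with hk2def
  have hk1S := S.min'_mem hSne
  have hk2S := S.max'_mem hSne
  have hk12 : k1 + 5 ≤ k2 := by
    have hsub4 : S ⊆ Finset.Icc k1 k2 := fun k hk =>
      Finset.mem_Icc.2 ⟨Finset.min'_le S k hk, Finset.le_max' S k hk⟩
    have := (Finset.card_le_card hsub4)
    rw [Nat.card_Icc] at this
    have hle := Finset.min'_le S k2 hk2S
    omega
  -- extract good segments
  have key : ∀ k, k ∈ S → ∃ z, dist (γ (t k)) z = s/2 ∧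
      s/2 - a*s/3 ≤ f (γ (t k)) - f z ∧ |f z - f (γ (t k))| ≤ s/2 := by
    intro k hk
    obtain ⟨hkr, hdefk, _⟩ := Finset.mem_filter.1 hk
    have hkK := Finset.mem_range.1 hkr
    have hle := htmono k (k+1) (Nat.le_succ k) hkK
    obtain ⟨z, hz1, hz2, hz3⟩ := segment_extract f hf γ hγc hle
      (Icc_subset_Icc (htIcc k hkK.le).1 (htIcc (k+1) hkK).2) hs
      (hdrop k hkK) (hLfin k hkK) (by linarith : (L k).toReal ≤ s + a*s/3)
    exact ⟨z, hz1, by linarith, hz3⟩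
  obtain ⟨z, hz1, hz2, hz3⟩ := key k1 hk1S
  obtain ⟨y, hy1, hy2, hy3⟩ := key k2 hk2S
  have hk1K := Finset.mem_range.1 (Finset.mem_filter.1 hk1S).1
  have hk2K := Finset.mem_range.1 (Finset.mem_filter.1 hk2S).1
  have hfx : f (γ (t k1)) = lam k1 := htval k1 hk1K.le
  have hfw : f (γ (t k2)) = lam k2 := htval k2 hk2K.le
  have havoid1 := (Finset.mem_filter.1 hk1S).2.2
  have havoid2 := (Finset.mem_filter.1 hk2S).2.2
  have hmol : ∀ (x' z' : M), dist x' z' = s/2 → s/2 - a*s/3 ≤ f x' - f z' →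
      molEval f x' z' > 1 - a := by
    intro x' z' hd hq
    rw [molEval, hd, gt_iff_lt, lt_div_iff₀ (by linarith : (0:ℝ) < s/2)]
    have := mul_pos ha hs
    nlinarith [this]
  have hlam12 : lam k1 - lam k2 = ((k2:ℝ) - k1) * s := by rw [hlamval, hlamval]; push_cast; ring
  have hk12r : (5:ℝ) ≤ (k2:ℝ) - k1 := by
    have : ((k1:ℕ):ℝ) + 5 ≤ ((k2:ℕ):ℝ) := by exact_mod_cast hk12
    linarith
  refine ⟨γ (t k1), z, γ (t k2), y, hz1, dist_comm (γ (t k2)) y ▸ hy1, hmol _ _ hz1 hz2,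
    hmol _ _ hy1 hy2, ?_, ?_⟩
  · -- s ≤ |f x - f y|
    have h1 : f (γ (t k1)) - f y ≥ (lam k1 - lam k2) - s/2 := by
      have := abs_le.1 hy3
      rw [hfw] at *
      rw [hfx]
      linarith [this.2]
    have h2 : lam k1 - lam k2 ≥ 5 * s := by rw [hlam12]; nlinarith
    have : s ≤ f (γ (t k1)) - f y := by linarith
    exact this.trans (le_abs_self _)
  · intro c hc
    constructor
    · rw [hfx]
      have := havoid1 c hc
      linarith
    · have h1 := havoid2 c hc
      have h2 : |lam k2 - c| ≤ |lam k2 - f y| + |f y - c| := abs_sub_le _ _ _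
      have h3 : |lam k2 - f y| ≤ s/2 := by rw [abs_sub_comm, ← hfw]; exact hy3
      linarith

set_option maxHeartbeats 1000000 in
lemma assemble {M : Type*} [MetricSpace M] (hM : IsLengthSpace M) (n : ℕ) (hn : 0 < n)
    (f g : Fin n → M → ℝ) (hg : ∀ i, LipschitzWith 1 (g i))
    (p q : Fin n → M) (α a s : ℝ) (ha : 0 < a) (ha1 : a ≤ 1) (hs : 0 < s)
    (hcount : ∀ (i : Fin n) (F : Finset ℝ), F.card ≤ 2*n →
      3*(dist (p i) (q i) + 2*s - (g i (p i) - g i (q i)))/a + s*(6*F.card + 7)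
        ≤ g i (p i) - g i (q i))
    (htrans : ∀ (i : Fin n) (x z : M), 0 < dist x z →
      molEval (g i) x z > 1 - a → molEval (f i) x z > 1 - α) :
    ∃ (x z w y : Fin n → M) (r : Fin n → ℝ),
      (∀ i, 0 < r i ∧ dist (x i) (z i) = r i ∧ dist (y i) (w i) = r i ∧
        molEval (f i) (x i) (z i) > 1 - α ∧ molEval (f i) (w i) (y i) > 1 - α) ∧
      (∀ i j, i ≠ j → Disjoint (ball (x i) (r i)) (ball (x j) (r j))) ∧
      (∀ i j, i ≠ j → Disjoint (ball (y i) (r i)) (ball (y j) (r j))) ∧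
      (∀ i j, Disjoint (ball (x i) (r i)) (ball (y j) (r j))) := by
  classical
  have build : ∀ m : ℕ, ∃ x z w y : Fin n → M,
      ∀ i : Fin n, (i:ℕ) < m →
        (dist (x i) (z i) = s/2 ∧ dist (y i) (w i) = s/2 ∧
         molEval (g i) (x i) (z i) > 1 - a ∧ molEval (g i) (w i) (y i) > 1 - a ∧
         s ≤ |g i (x i) - g i (y i)| ∧
         ∀ j : Fin n, (j:ℕ) < (i:ℕ) →
           (s ≤ |g i (x i) - g i (x j)| ∧ s ≤ |g i (x i) - g i (y j)| ∧
            s ≤ |g i (y i) - g i (x j)| ∧ s ≤ |g i (y i) - g i (y j)|)) := by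
    intro m
    induction m with
    | zero => exact ⟨p, p, p, p, fun i hi => absurd hi (Nat.not_lt_zero _)⟩
    | succ m ih =>
      obtain ⟨x, z, w, y, hprev⟩ := ih
      by_cases hmn : m < n
      · set i₀ : Fin n := ⟨m, hmn⟩ with hi₀
        set Fm : Finset ℝ :=
          ((Finset.univ.filter (fun j : Fin n => (j:ℕ) < m)).image (fun j => g i₀ (x j))) ∪
          ((Finset.univ.filter (fun j : Fin n => (j:ℕ) < m)).image (fun j => g i₀ (y j)))
          with hFm
        have hFcard : Fm.card ≤ 2*n := by
          have h1 := Finset.card_union_le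
            ((Finset.univ.filter (fun j : Fin n => (j:ℕ) < m)).image (fun j => g i₀ (x j)))
            ((Finset.univ.filter (fun j : Fin n => (j:ℕ) < m)).image (fun j => g i₀ (y j)))
          have h2 := Finset.card_image_le
            (s := Finset.univ.filter (fun j : Fin n => (j:ℕ) < m)) (f := fun j => g i₀ (x j))
          have h3 := Finset.card_image_le
            (s := Finset.univ.filter (fun j : Fin n => (j:ℕ) < m)) (f := fun j => g i₀ (y j))
          have h4 : (Finset.univ.filter (fun j : Fin n => (j:ℕ) < m)).card ≤ n := by
            calc (Finset.univ.filter (fun j : Fin n => (j:ℕ) < m)).card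
                ≤ (Finset.univ : Finset (Fin n)).card := Finset.card_filter_le _ _
            _ = n := by simp
          rw [hFm]
          omega
        obtain ⟨x', z', w', y', hd1, hd2, hm1, hm2, hsep, havd⟩ :=
          step hM (g i₀) (hg i₀) (p i₀) (q i₀) a s ha ha1 hs Fm (hcount i₀ Fm hFcard)
        refine ⟨Function.update x i₀ x', Function.update z i₀ z',
          Function.update w i₀ w', Function.update y i₀ y', ?_⟩
        intro i hi
        by_cases hii : i = i₀
        · subst hii
          simp only [Function.update_self]
          refine ⟨hd1, hd2, hm1, hm2, hsep, ?_⟩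
          intro j hj
          have hji : j ≠ i₀ := by
            intro hcon
            rw [hcon] at hj
            exact lt_irrefl _ hj
          simp only [Function.update_of_ne hji]
          have hxmem : g i₀ (x j) ∈ Fm := by
            rw [hFm]
            exact Finset.mem_union.2 (Or.inl (Finset.mem_image.2
              ⟨j, Finset.mem_filter.2 ⟨Finset.mem_univ j, hj⟩, rfl⟩))
          have hymem : g i₀ (y j) ∈ Fm := by
            rw [hFm]
            exact Finset.mem_union.2 (Or.inr (Finset.mem_image.2
              ⟨j, Finset.mem_filter.2 ⟨Finset.mem_univ j, hj⟩, rfl⟩))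
          exact ⟨(havd _ hxmem).1, (havd _ hymem).1, (havd _ hxmem).2, (havd _ hymem).2⟩
        · have hival : (i:ℕ) < m := by
            have hne : (i:ℕ) ≠ m := fun hc => hii (Fin.ext hc)
            omega
          simp only [Function.update_of_ne hii]
          obtain ⟨e1, e2, e3, e4, e5, e6⟩ := hprev i hival
          refine ⟨e1, e2, e3, e4, e5, ?_⟩
          intro j hj
          have hji : j ≠ i₀ := by
            have hlt : (j:ℕ) < m := hj.trans hival
            intro hc
            rw [hc] at hlt
            exact lt_irrefl _ hlt
          simp only [Function.update_of_ne hji]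
          exact e6 j hj
      · exact ⟨x, z, w, y, fun i hi => hprev i (lt_of_lt_of_le i.isLt (le_of_not_gt hmn))⟩
  obtain ⟨x, z, w, y, hall⟩ := build n
  have hget : ∀ i : Fin n, _ := fun i => hall i i.isLt
  have hs2 : (0:ℝ) < s/2 := by linarith
  refine ⟨x, z, w, y, fun _ => s/2, ?_, ?_, ?_, ?_⟩
  · intro i
    obtain ⟨e1, e2, e3, e4, _, _⟩ := hget i
    exact ⟨hs2, e1, e2, htrans i _ _ (e1 ▸ hs2) e3,
      htrans i _ _ (by rw [dist_comm] at e2; exact e2 ▸ hs2) e4⟩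
  · intro i j hij
    rcases lt_or_gt_of_ne (fun hc => hij (Fin.ext hc) : (i:ℕ) ≠ (j:ℕ)) with h | h
    · exact (balls_disjoint (hg j) (by
        have := ((hget j).2.2.2.2.2 i h).1
        linarith)).symm
    · exact balls_disjoint (hg i) (by
        have := ((hget i).2.2.2.2.2 j h).1
        linarith)
  · intro i j hij
    rcases lt_or_gt_of_ne (fun hc => hij (Fin.ext hc) : (i:ℕ) ≠ (j:ℕ)) with h | h
    · exact (balls_disjoint (hg j) (by
        have := ((hget j).2.2.2.2.2 i h).2.2.2
        linarith)).symm
    · exact balls_disjoint (hg i) (by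
        have := ((hget i).2.2.2.2.2 j h).2.2.2
        linarith)
  · intro i j
    rcases lt_trichotomy ((i:ℕ)) ((j:ℕ)) with h | h | h
    · exact (balls_disjoint (hg j) (by
        have := ((hget j).2.2.2.2.2 i h).2.2.1
        linarith)).symm
    · have hij : i = j := Fin.ext h
      subst hij
      exact balls_disjoint (hg i) (by
        have := (hget i).2.2.2.2.1
        linarith)
    · exact balls_disjoint (hg i) (by
        have := ((hget i).2.2.2.2.2 j h).2.1
        linarith)


set_option maxHeartbeats 1000000 in
/-- The combinatorial core of Theorem 2.2. -/
theorem exists_separated_norming_pairs {M : Type*} [MetricSpace M]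
    (hM : IsLengthSpace M) (n : ℕ) (hn : 0 < n)
    (f : Fin n → M → ℝ) (hf : ∀ i, LipschitzWith 1 (f i)) (α : ℝ) (hα : 0 < α)
    (u v : Fin n → M) (huv : ∀ i, u i ≠ v i)
    (hnorm : ∀ i, molEval (f i) (u i) (v i) > 1 - α / (18 * n)) :
    ∃ (x z w y : Fin n → M) (r : Fin n → ℝ),
      (∀ i, 0 < r i ∧ dist (x i) (z i) = r i ∧ dist (y i) (w i) = r i ∧
        molEval (f i) (x i) (z i) > 1 - α ∧ molEval (f i) (w i) (y i) > 1 - α) ∧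
      (∀ i j, i ≠ j → Disjoint (ball (x i) (r i)) (ball (x j) (r j))) ∧
      (∀ i j, i ≠ j → Disjoint (ball (y i) (r i)) (ball (y j) (r j))) ∧
      (∀ i j, Disjoint (ball (x i) (r i)) (ball (y j) (r j))) := by
  classical
  have hne : (Finset.univ : Finset (Fin n)).Nonempty := ⟨⟨0, hn⟩, Finset.mem_univ _⟩
  have hDne : (Finset.univ.image (fun i => dist (u i) (v i))).Nonempty := hne.image _
  set D := (Finset.univ.image (fun i => dist (u i) (v i))).min' hDne with hD
  have hDpos : 0 < D := by
    obtain ⟨i, _, hi⟩ := Finset.mem_image.1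
      ((Finset.univ.image (fun i => dist (u i) (v i))).min'_mem hDne)
    rw [hD, ← hi]
    exact dist_pos.2 (huv i)
  have hDle : ∀ i, D ≤ dist (u i) (v i) := fun i =>
    Finset.min'_le _ _ (Finset.mem_image_of_mem _ (Finset.mem_univ i))
  set a := min α 1 with ha'
  have ha : 0 < a := lt_min hα one_pos
  have ha1 : a ≤ 1 := min_le_right _ _
  set s := a * D / (100 * (n+1)) with hs'
  have hs : 0 < s := by positivity
  have hn1R : (1:ℝ) ≤ (n:ℝ) := by exact_mod_cast hn
  have hnnR : (0:ℝ) < (n:ℝ) := by linarith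
  -- general numeric counting bound
  have hcount_gen : ∀ (d T : ℝ), D ≤ d → T ≤ d → (1 - a/(9*n)) * d ≤ T →
      ∀ (F : Finset ℝ), F.card ≤ 2*n →
      3*(d + 2*s - T)/a + s*(6*F.card + 7) ≤ T := by
    intro d T hDd hTd hslack F hFc
    have hd0 : 0 < d := lt_of_lt_of_le hDpos hDd
    have e_slack : d - T ≤ a*d/(9*n) := by
      have h0 : (1 - a/(9*n))*d = d - a*d/(9*n) := by ring
      linarith
    have e1 : 3*(d + 2*s - T)/a ≤ 3*(a*d/(9*n) + 2*s)/a := by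
      have h3 : 3*(d + 2*s - T) ≤ 3*(a*d/(9*n) + 2*s) := by linarith
      have := mul_le_mul_of_nonneg_right h3 (inv_nonneg.2 ha.le)
      rw [div_eq_mul_inv, div_eq_mul_inv]
      exact this
    have e2 : 3*(a*d/(9*n) + 2*s)/a = d/(3*n) + 6*s/a := by
      field_simp
      ring
    have e3 : d/(3*n) ≤ d/3 := by
      rw [div_le_div_iff₀ (by positivity) (by norm_num)]
      nlinarith
    have e4 : 6*s/a = 6*D/(100*(n+1)) := by
      rw [hs']
      field_simp
    have e5 : 6*D/(100*(n+1)) ≤ 3*d/100 := by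
      rw [div_le_div_iff₀ (by positivity) (by norm_num)]
      nlinarith [mul_le_mul_of_nonneg_left hDd (show (0:ℝ) ≤ 600 by norm_num),
        mul_le_mul_of_nonneg_left hn1R hd0.le]
    have e6 : s*(6*F.card+7) ≤ 19*d/100 := by
      have hFcR : (F.card:ℝ) ≤ 2*n := by exact_mod_cast hFc
      have h1 : s*(6*(F.card:ℝ)+7) ≤ s*(12*n+7) := by nlinarith [hs.le]
      have hsD : s ≤ D/(100*(n+1)) := by
        rw [hs']
        apply div_le_div_of_nonneg_right ?_ (by positivity)
        · nlinarith
      have h2 : s*(12*(n:ℝ)+7) ≤ (D/(100*(n+1)))*(12*n+7) :=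
        mul_le_mul_of_nonneg_right hsD (by positivity)
      have h2' : (D/(100*((n:ℝ)+1)))*(12*n+7) = D*(12*n+7)/(100*(n+1)) :=
        div_mul_eq_mul_div _ _ _
      have h3 : D*(12*(n:ℝ)+7)/(100*(n+1)) ≤ 19*d/100 := by
        rw [div_le_div_iff₀ (by positivity) (by norm_num)]
        nlinarith [mul_le_mul_of_nonneg_right hDd (show (0:ℝ) ≤ (12*(n:ℝ)+7)*100 by positivity),
          mul_nonneg hd0.le (show (0:ℝ) ≤ (n:ℝ) by positivity)]
      linarith
    have e7 : a/(9*n) ≤ 1/9 := by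
      rw [div_le_div_iff₀ (by positivity) (by norm_num)]
      nlinarith
    have e8 : (8/9)*d ≤ T := by
      nlinarith [mul_nonneg (sub_nonneg.2 e7) hd0.le]
    have efinal : 3*(d + 2*s - T)/a + s*(6*F.card+7) ≤ d/3 + 3*d/100 + 19*d/100 := by
      rw [e2] at e1
      rw [e4] at e1
      linarith
    nlinarith [hd0]
  by_cases hα2 : α ≤ 2
  · -- use g = f directly
    apply assemble hM n hn f f hf u v α a s ha ha1 hs
    · intro i F hF
      apply hcount_gen _ _ (hDle i) ?_ ?_ F hF
      · have : |f i (u i) - f i (v i)| ≤ dist (u i) (v i) := by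
          simpa [Real.dist_eq] using (hf i).dist_le_mul (u i) (v i)
        exact (le_abs_self _).trans this
      · have hd0 : 0 < dist (u i) (v i) := dist_pos.2 (huv i)
        have h1 := hnorm i
        rw [molEval, gt_iff_lt, lt_div_iff₀ hd0] at h1
        have h2a : α ≤ 2*a := by
          rcases le_total α 1 with h | h
          · rw [ha', min_eq_left h]; linarith
          · rw [ha', min_eq_right h]; linarith
        have hcoef : α/(18*n) ≤ a/(9*n) := by
          rw [div_le_div_iff₀ (by positivity) (by positivity)]
          nlinarith
        have := mul_le_mul_of_nonneg_right (show 1 - a/(9*(n:ℝ)) ≤ 1 - α/(18*n) by linarith)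
          hd0.le
        exact this.trans h1.le
    · intro i x z hd hmol
      have hax : a ≤ α := min_le_left _ _
      calc (1:ℝ) - α ≤ 1 - a := by linarith
      _ < molEval (f i) x z := hmol
  · -- α > 2 : norming is automatic, use distance functions
    push_neg at hα2
    apply assemble hM n hn f (fun i => fun m => dist m (u i))
      (fun i => LipschitzWith.dist_left (u i)) v u α a s ha ha1 hs
    · intro i F hF
      have hcomm : dist (v i) (u i) = dist (u i) (v i) := dist_comm _ _
      have hTeq : dist (v i) (u i) - dist (u i) (u i) = dist (v i) (u i) := by
        rw [dist_self]; ring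
      apply hcount_gen _ _ (by rw [hcomm]; exact hDle i) ?_ ?_ F hF
      · rw [hTeq]
      · rw [hTeq]
        have hd0 : (0:ℝ) ≤ dist (v i) (u i) := dist_nonneg
        nlinarith [div_nonneg ha.le (show (0:ℝ) ≤ 9*n by positivity)]
    · intro i x z hd _
      rw [molEval, gt_iff_lt, lt_div_iff₀ hd]
      have h1 : |f i x - f i z| ≤ dist x z := by
        simpa [Real.dist_eq] using (hf i).dist_le_mul x z
      nlinarith [neg_abs_le (f i x - f i z)]
end

section
/- Let M be a length space, u ≠ v ∈ M, n a positive integer, r = d(u,v)/(9n), and γ a path from u to v with L(γ) < (1+1/(18n))·d(u,v). If w is a point on γ with d(w, v) ≥ 2r (respectively d(w,u) ≥ 2r), then there exists a point z on γ with d(w,z) = r and d(z,v) < d(w,v) (respectively d(z,u) < d(w,u)). -/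
open Set Metric

/-- Auxiliary: sum of three chords along the path is at most the path length. -/
lemma three_chords_le {M : Type*} [MetricSpace M] (γ : ℝ → M)
    (hfin : FiniteLength γ) {a b : ℝ} (h0a : 0 ≤ a) (hab : a ≤ b) (hb1 : b ≤ 1) :
    dist (γ 0) (γ a) + dist (γ a) (γ b) + dist (γ b) (γ 1) ≤ pathLength γ := by
  set s : Set ℝ := Set.Icc (0:ℝ) 1 with hs
  have ha : a ∈ s := ⟨h0a, hab.trans hb1⟩
  have hbm : b ∈ s := ⟨h0a.trans hab, hb1⟩
  have h01 : (0:ℝ) ≤ 1 := by norm_num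
  have e1 : edist (γ 0) (γ a) ≤ eVariationOn γ (s ∩ Set.Icc 0 a) :=
    eVariationOn.edist_le γ ⟨⟨le_rfl, h01⟩, le_rfl, h0a⟩ ⟨ha, h0a, le_rfl⟩
  have e2 : edist (γ a) (γ b) ≤ eVariationOn γ (s ∩ Set.Icc a b) :=
    eVariationOn.edist_le γ ⟨ha, le_rfl, hab⟩ ⟨hbm, hab, le_rfl⟩
  have e3 : edist (γ b) (γ 1) ≤ eVariationOn γ (s ∩ Set.Icc b 1) :=
    eVariationOn.edist_le γ ⟨hbm, le_rfl, hb1⟩ ⟨⟨h01, le_rfl⟩, hb1, le_rfl⟩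
  have hsum : eVariationOn γ (s ∩ Set.Icc 0 a) + eVariationOn γ (s ∩ Set.Icc a b)
      + eVariationOn γ (s ∩ Set.Icc b 1) = eVariationOn γ s := by
    rw [eVariationOn.Icc_add_Icc γ h0a hab ha,
      eVariationOn.Icc_add_Icc γ (h0a.trans hab) hb1 hbm]
    congr 1
    simp [hs]
  have key : edist (γ 0) (γ a) + edist (γ a) (γ b) + edist (γ b) (γ 1)
      ≤ eVariationOn γ s := by
    calc edist (γ 0) (γ a) + edist (γ a) (γ b) + edist (γ b) (γ 1)
        ≤ eVariationOn γ (s ∩ Set.Icc 0 a) + eVariationOn γ (s ∩ Set.Icc a b)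
          + eVariationOn γ (s ∩ Set.Icc b 1) := by
          exact add_le_add (add_le_add e1 e2) e3
      _ = eVariationOn γ s := hsum
  have := ENNReal.toReal_mono hfin key
  rw [ENNReal.toReal_add, ENNReal.toReal_add] at this
  · simpa [dist_edist, pathLength] using this
  · exact edist_ne_top _ _
  · exact edist_ne_top _ _
  · exact ENNReal.add_ne_top.2 ⟨edist_ne_top _ _, edist_ne_top _ _⟩
  · exact edist_ne_top _ _

theorem exists_companion_point {M : Type*} [MetricSpace M] (hM : IsLengthSpace M)
    (u v : M) (huv : u ≠ v) (n : ℕ) (hn : 0 < n) (γ : ℝ → M)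
    (hγ : IsPathFrom γ u v) (hfin : FiniteLength γ)
    (hL : pathLength γ < (1 + 1 / (18 * n)) * dist u v)
    (w : M) (hw : w ∈ γ '' Set.Icc (0:ℝ) 1) :
    (2 * (dist u v / (9 * n)) ≤ dist w v →
      ∃ z ∈ γ '' Set.Icc (0:ℝ) 1, dist w z = dist u v / (9 * n) ∧ dist z v < dist w v) ∧
    (2 * (dist u v / (9 * n)) ≤ dist w u →
      ∃ z ∈ γ '' Set.Icc (0:ℝ) 1, dist w z = dist u v / (9 * n) ∧ dist z u < dist w u) := by
  obtain ⟨hcont, hγ0, hγ1⟩ := hγ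
  obtain ⟨t₀, ht₀, hwt⟩ := hw
  set r : ℝ := dist u v / (9 * n) with hr
  have hd : 0 < dist u v := dist_pos.2 huv
  have hnr : (0:ℝ) < 9 * n := by positivity
  have hrpos : 0 < r := div_pos hd hnr
  have hLbound : pathLength γ < dist u v + r := by
    have : (1 + 1 / (18 * (n:ℝ))) * dist u v = dist u v + dist u v / (18 * n) := by
      field_simp
    rw [this] at hL
    have : dist u v / (18 * n) ≤ r := by
      rw [hr]
      apply div_le_div_of_nonneg_left hd.le hnr
      push_cast; linarith [Nat.one_le_cast (α := ℝ) |>.2 hn]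
    linarith
  constructor
  · intro h2r
    -- IVT on [t₀, 1] for t ↦ dist w (γ t)
    have hf : ContinuousOn (fun t => dist w (γ t)) (Set.Icc t₀ 1) :=
      (continuous_const.dist continuous_id).comp_continuousOn
        (hcont.mono (Set.Icc_subset_Icc ht₀.1 le_rfl))
    have hmem : r ∈ Set.Icc (dist w (γ t₀)) (dist w (γ 1)) := by
      rw [hwt, hγ1]
      exact ⟨by simp [hrpos.le], by linarith⟩
    obtain ⟨t, ht, hdt⟩ := intermediate_value_Icc ht₀.2 hf hmem
    refine ⟨γ t, ⟨t, ⟨ht₀.1.trans ht.1, ht.2⟩, rfl⟩, hdt, ?_⟩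
    -- chord inequality with 0 ≤ t₀ ≤ t ≤ 1
    have hch := three_chords_le γ hfin ht₀.1 ht.1 ht.2
    rw [hγ0, hγ1, hwt] at hch
    have htri : dist u v ≤ dist u w + dist w v := dist_triangle u w v
    have : dist w (γ t) = r := hdt
    have hsymm : dist (γ t) w = dist w (γ t) := dist_comm _ _
    calc dist (γ t) v ≤ pathLength γ - dist u w - dist w (γ t) := by linarith
      _ < dist w v := by rw [this]; linarith
  · intro h2r
    -- IVT on [0, t₀] for t ↦ dist w (γ t), decreasing direction
    have hf : ContinuousOn (fun t => dist w (γ t)) (Set.Icc 0 t₀) :=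
      (continuous_const.dist continuous_id).comp_continuousOn
        (hcont.mono (Set.Icc_subset_Icc le_rfl ht₀.2))
    have hmem : r ∈ Set.Icc (dist w (γ t₀)) (dist w (γ 0)) := by
      rw [hwt, hγ0]
      exact ⟨by simp [hrpos.le], by linarith⟩
    obtain ⟨t, ht, hdt⟩ := intermediate_value_Icc' ht₀.1 hf hmem
    refine ⟨γ t, ⟨t, ⟨ht.1, ht.2.trans ht₀.2⟩, rfl⟩, hdt, ?_⟩
    have hch := three_chords_le γ hfin ht.1 ht.2 ht₀.2
    rw [hγ0, hγ1, hwt] at hch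
    have htri : dist u v ≤ dist u w + dist w v := dist_triangle u w v
    have : dist w (γ t) = r := hdt
    have hsymm : dist (γ t) w = dist w (γ t) := dist_comm _ _
    have hsu : dist u (γ t) = dist (γ t) u := dist_comm _ _
    calc dist (γ t) u ≤ pathLength γ - dist w v - dist w (γ t) := by linarith
      _ < dist w u := by rw [this, dist_comm w u]; linarith
end
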